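/- For n ≥ 3, |C(n)| = |B(n)| + |S(n)|, where C(n) is the set of zero-free degree sequences of length n with smallest part exactly 1, B(n) the subset of C(n) with largest part exactly n-1, and S(n) the set of zero-free degree sequences of length n with largest part exactly n-2. -/

import Mathlib

/-- A function `d : Fin n → ℕ` is graphic if it is the degree sequence of a
simple undirected graph on `n` vertices. -/
def Graphic (n : ℕ) (d : Fin n → ℕ) : Prop :=
  ∃ G : SimpleGraph (Fin n), ∀ v, (G.neighborSet v).ncard = d v

/-- Zero-free degree sequences of length `n` (non-increasing, positive, graphic). -/
def D (n : ℕ) : Set (Fin n → ℕ) :=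
  {d | Antitone d ∧ (∀ i, 0 < d i) ∧ Graphic n d}

/-- Degree sequences of length `n` allowing zero terms. -/
def D0 (n : ℕ) : Set (Fin n → ℕ) :=
  {d | Antitone d ∧ Graphic n d}
/-- Zero-free degree sequences of length n with smallest part exactly 1. -/
def C (n : ℕ) : Set (Fin n → ℕ) := {d | d ∈ D n ∧ ∃ i, d i = 1}

/-- Subset of C n with largest part exactly n-1. -/
def B (n : ℕ) : Set (Fin n → ℕ) := {d | d ∈ D n ∧ (∃ i, d i = n - 1) ∧ ∃ i, d i = 1}

/-- Zero-free degree sequences of length n with largest part exactly n-2. -/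
def S (n : ℕ) : Set (Fin n → ℕ) :=
  {d | d ∈ D n ∧ (∀ i, d i ≤ n - 2) ∧ ∃ i, d i = n - 2}

open Classical in
lemma aux_ncard_deg (n : ℕ) (G : SimpleGraph (Fin n)) (v : Fin n) :
    (G.neighborSet v).ncard = G.degree v := by
  rw [Set.ncard_eq_toFinset_card', Set.toFinset_card, SimpleGraph.card_neighborSet_eq_degree]

lemma aux_deg_le (n : ℕ) (d : Fin n → ℕ) (hd : Graphic n d) (i : Fin n) : d i ≤ n - 1 := by
  classical
  obtain ⟨G, hG⟩ := hd
  rw [← hG i, aux_ncard_deg]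
  have := SimpleGraph.degree_lt_card_verts (G := G) i
  rw [Fintype.card_fin] at this
  omega

def revCompl (n : ℕ) (d : Fin n → ℕ) : Fin n → ℕ := fun i => n - 1 - d (Fin.rev i)

lemma aux_graphic_revCompl (n : ℕ) (d : Fin n → ℕ) (hd : Graphic n d) :
    Graphic n (revCompl n d) := by
  classical
  obtain ⟨G, hG⟩ := hd
  refine ⟨SimpleGraph.comap Fin.rev Gᶜ, fun v => ?_⟩
  have himg : (SimpleGraph.comap Fin.rev Gᶜ).neighborSet v
      = Fin.rev '' (Gᶜ.neighborSet (Fin.rev v)) := by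
    ext w
    simp only [SimpleGraph.mem_neighborSet, SimpleGraph.comap_adj, Set.mem_image]
    constructor
    · intro h; exact ⟨Fin.rev w, h, Fin.rev_rev w⟩
    · rintro ⟨u, hu, rfl⟩; rwa [Fin.rev_rev]
  rw [himg, Set.ncard_image_of_injective _ (Fin.rev_injective), aux_ncard_deg,
    SimpleGraph.degree_compl, Fintype.card_fin, ← aux_ncard_deg, hG]
  rfl

lemma aux_finite (n : ℕ) (T : Set (Fin n → ℕ)) (hT : ∀ d ∈ T, ∀ i, d i ≤ n - 1) :
    T.Finite := by
  have : T ⊆ Set.pi Set.univ (fun _ : Fin n => Set.Iic (n - 1)) := by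
    intro d hd i _
    exact hT d hd i
  exact Set.Finite.subset (Set.Finite.pi fun _ => Set.finite_Iic _) this

theorem card_C_eq (n : ℕ) (hn : 3 ≤ n) :
    (C n).ncard = (B n).ncard + (S n).ncard := by
  classical
  set W : Set (Fin n → ℕ) :=
    {d | d ∈ D n ∧ (∃ i, d i = 1) ∧ ∀ i, d i ≤ n - 2} with hW
  have hCfin : (C n).Finite :=
    aux_finite n _ (fun d hd i => aux_deg_le n d hd.1.2.2 i)
  have hSfin : (S n).Finite :=
    aux_finite n _ (fun d hd i => aux_deg_le n d hd.1.2.2 i)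
  have hBsub : B n ⊆ C n := fun d hd => ⟨hd.1, hd.2.2⟩
  -- C \ B = W
  have hdiff : C n \ B n = W := by
    ext d
    constructor
    · rintro ⟨⟨hD, h1⟩, hnB⟩
      refine ⟨hD, h1, fun i => ?_⟩
      have hle := aux_deg_le n d hD.2.2 i
      have : d i ≠ n - 1 := fun h => hnB ⟨hD, ⟨i, h⟩, h1⟩
      omega
    · rintro ⟨hD, h1, hle⟩
      refine ⟨⟨hD, h1⟩, fun hB => ?_⟩
      obtain ⟨i, hi⟩ := hB.2.1
      have := hle i
      omega
  -- complement bijection W ↔ S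
  have hmemW : ∀ d ∈ W, ∀ i, d i ≤ n - 1 := fun d hd i => by
    have := hd.2.2 i; omega
  have hmemS : ∀ d ∈ S n, ∀ i, d i ≤ n - 1 := fun d hd i => by
    have := hd.2.1 i; omega
  have hinv : ∀ d : Fin n → ℕ, (∀ i, d i ≤ n - 1) → revCompl n (revCompl n d) = d := by
    intro d hle
    funext i
    simp only [revCompl, Fin.rev_rev]
    have := hle i
    omega
  have hWS : ∀ d ∈ W, revCompl n d ∈ S n := by
    rintro d ⟨⟨hA, hpos, hG⟩, ⟨i0, hi0⟩, hle⟩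
    refine ⟨⟨?_, ?_, aux_graphic_revCompl n d hG⟩, ?_, ⟨Fin.rev i0, ?_⟩⟩
    · intro i j hij
      exact Nat.sub_le_sub_left (hA (Fin.rev_le_rev.mpr hij)) _
    · intro i
      have := hle (Fin.rev i)
      simp only [revCompl]
      omega
    · intro i
      have := hpos (Fin.rev i)
      simp only [revCompl]
      omega
    · simp only [revCompl, Fin.rev_rev, hi0]
      omega
  have hSW : ∀ d ∈ S n, revCompl n d ∈ W := by
    rintro d ⟨⟨hA, hpos, hG⟩, hle, ⟨i0, hi0⟩⟩
    refine ⟨⟨?_, ?_, aux_graphic_revCompl n d hG⟩, ⟨Fin.rev i0, ?_⟩, ?_⟩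
    · intro i j hij
      exact Nat.sub_le_sub_left (hA (Fin.rev_le_rev.mpr hij)) _
    · intro i
      have := hle (Fin.rev i)
      simp only [revCompl]
      omega
    · simp only [revCompl, Fin.rev_rev, hi0]
      omega
    · intro i
      have := hpos (Fin.rev i)
      simp only [revCompl]
      omega
  have himg : S n = revCompl n '' W := by
    ext e
    constructor
    · intro he
      exact ⟨revCompl n e, hSW e he, hinv e (hmemS e he)⟩
    · rintro ⟨d, hd, rfl⟩
      exact hWS d hd
  have hWScard : W.ncard = (S n).ncard := by
    rw [himg, Set.ncard_image_of_injOn]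
    intro d1 h1 d2 h2 heq
    have := congrArg (revCompl n) heq
    rwa [hinv d1 (hmemW d1 h1), hinv d2 (hmemW d2 h2)] at this
  have := Set.ncard_diff_add_ncard_of_subset hBsub hCfin
  rw [hdiff, hWScard] at this
  omega
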